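/- Let A, B be finite sets, f : A → B a surjection, ξ ∈ Δ(A), and ψ ∈ Δ(B). Then there exists ξ' ∈ Δ(A) with f_*ξ' = ψ and ‖ξ − ξ'‖₁ = ‖f_*ξ − ψ‖₁. -/

import Mathlib

theorem lift_preserving_tvd (A B : Type*) [Fintype A] [Fintype B] [DecidableEq B]
    (f : A → B) (hf : Function.Surjective f)
    (ξ : A → ℝ) (hξ : (∀ i, 0 ≤ ξ i) ∧ ∑ i, ξ i = 1)
    (ψ : B → ℝ) (hψ : (∀ k, 0 ≤ ψ k) ∧ ∑ k, ψ k = 1) :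
    ∃ ξ' : A → ℝ, (∀ i, 0 ≤ ξ' i) ∧ (∑ i, ξ' i = 1) ∧
      (∀ k, ∑ i ∈ Finset.univ.filter (fun i => f i = k), ξ' i = ψ k) ∧
      (∑ i, |ξ i - ξ' i|) =
        ∑ k, |(∑ i ∈ Finset.univ.filter (fun i => f i = k), ξ i) - ψ k| := by
  classical
  obtain ⟨hξ0, hξ1⟩ := hξ
  obtain ⟨hψ0, hψ1⟩ := hψ
  set φ : B → ℝ := fun k => ∑ i ∈ Finset.univ.filter (fun i => f i = k), ξ i with hφ
  have hφ0 : ∀ k, 0 ≤ φ k := fun k => Finset.sum_nonneg fun i _ => hξ0 i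
  -- if fiber mass is zero, every ξ on the fiber is zero
  have hzero : ∀ k, φ k = 0 → ∀ i, f i = k → ξ i = 0 := by
    intro k hk i hi
    have := (Finset.sum_eq_zero_iff_of_nonneg (fun j _ => hξ0 j)).mp hk i
      (by simp [hi])
    exact this
  set g : B → A := Function.surjInv hf with hg
  have hgf : ∀ k, f (g k) = k := fun k => Function.surjInv_eq hf k
  set ξ' : A → ℝ := fun i =>
    if φ (f i) = 0 then (if i = g (f i) then ψ (f i) else 0)
    else ξ i * ψ (f i) / φ (f i) with hξ'
  have hnn : ∀ i, 0 ≤ ξ' i := by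
    intro i
    simp only [hξ']
    split_ifs with h1 h2
    · exact hψ0 _
    · exact le_refl 0
    · exact div_nonneg (mul_nonneg (hξ0 i) (hψ0 _)) (hφ0 _)
  have hfiber : ∀ k, ∑ i ∈ Finset.univ.filter (fun i => f i = k), ξ' i = ψ k := by
    intro k
    by_cases hk : φ k = 0
    · have hmem : g k ∈ Finset.univ.filter (fun i => f i = k) := by simp [hgf k]
      have h2 : ∀ i ∈ Finset.univ.filter (fun i => f i = k),
          ξ' i = if i = g k then ψ k else 0 := by
        intro i hi
        simp only [Finset.mem_filter] at hi
        simp [hξ', hi.2, hk]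
      rw [Finset.sum_congr rfl h2, Finset.sum_ite_eq' _ (g k) (fun _ => ψ k), if_pos hmem]
    · have : ∀ i ∈ Finset.univ.filter (fun i => f i = k), ξ' i = ξ i * ψ k / φ k := by
        intro i hi
        simp only [Finset.mem_filter] at hi
        simp [hξ', hi.2, hk]
      rw [Finset.sum_congr rfl this, ← Finset.sum_div, ← Finset.sum_mul,
        show (∑ i ∈ Finset.univ.filter (fun i => f i = k), ξ i) = φ k from rfl]
      field_simp
  have htot : ∑ i, ξ' i = 1 := by
    rw [← hψ1, ← Finset.sum_fiberwise (Finset.univ) f ξ']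
    exact Finset.sum_congr rfl fun k _ => hfiber k
  refine ⟨ξ', hnn, htot, hfiber, ?_⟩
  rw [← Finset.sum_fiberwise (Finset.univ) f (fun i => |ξ i - ξ' i|)]
  refine Finset.sum_congr rfl fun k _ => ?_
  by_cases hk : φ k = 0
  · have h1 : ∀ i ∈ Finset.univ.filter (fun i => f i = k), |ξ i - ξ' i| = ξ' i := by
      intro i hi
      simp only [Finset.mem_filter] at hi
      rw [hzero k hk i hi.2, zero_sub, abs_neg, abs_of_nonneg (hnn i)]
    rw [Finset.sum_congr rfl h1, hfiber k,
      show (∑ i ∈ Finset.univ.filter (fun i => f i = k), ξ i) = φ k from rfl,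
      hk, zero_sub, abs_neg, abs_of_nonneg (hψ0 k)]
  · have h1 : ∀ i ∈ Finset.univ.filter (fun i => f i = k),
        |ξ i - ξ' i| = ξ i * (|φ k - ψ k| / φ k) := by
      intro i hi
      simp only [Finset.mem_filter] at hi
      simp only [hξ', hi.2, hk, if_neg, ite_false]
      have hφpos : 0 < φ k := lt_of_le_of_ne (hφ0 k) (Ne.symm hk)
      rw [show ξ i - ξ i * ψ k / φ k = ξ i * ((φ k - ψ k) / φ k) by field_simp]
      rw [abs_mul, abs_of_nonneg (hξ0 i), abs_div, abs_of_pos hφpos]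
    rw [Finset.sum_congr rfl h1, ← Finset.sum_mul,
      show (∑ i ∈ Finset.univ.filter (fun i => f i = k), ξ i) = φ k from rfl]
    have hφpos : 0 < φ k := lt_of_le_of_ne (hφ0 k) (Ne.symm hk)
    field_simp
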